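/- KL-regularized objective monotonicity: In the setting of soft policy iteration with J_f(π) = E_{s∼ρ₀, a∼π}[Q_π(s,a) − β·KL(π(·|s) ‖ π_d(·|s))], the update π_n(·|s) ∝ π_d(·|s)·exp(Q_{π_{n-1}}(s,·)/β) satisfies J_f(π_n) ≥ J_f(π_{n-1}) for all n ≥ 1. -/

import Mathlib

/-- Discrete KL divergence `∑_a p(a)·log(p(a)/q(a))`. -/
noncomputable def klDisc {A : Type*} [Fintype A] (p q : A → ℝ) : ℝ :=
  ∑ a, p a * Real.log (p a / q a)

/-- Distribution of the state at time `i+1`, starting from state `s` and action `a`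
and afterwards following policy `pol` in the MDP with transition kernel `P`. -/
def sdistFrom {S A : Type*} [Fintype S] [Fintype A]
    (P : S → A → S → ℝ) (pol : S → A → ℝ) (s : S) (a : A) : ℕ → S → ℝ
  | 0 => P s a
  | i + 1 => fun s'' => ∑ s', ∑ a', sdistFrom P pol s a i s' * pol s' a' * P s' a' s''

/-- KL-regularized (soft) Q-function:
`Q_π(s,a) = E[R(s₀,a₀) + ∑_{i≥1} γ^i (R(s_i,a_i) − β·KL(π(·|s_i)‖π_d(·|s_i)))]`. -/
noncomputable def softQ {S A : Type*} [Fintype S] [Fintype A]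
    (γ β : ℝ) (R : S → A → ℝ) (P : S → A → S → ℝ) (πd pol : S → A → ℝ)
    (s : S) (a : A) : ℝ :=
  R s a + ∑' i : ℕ, γ ^ (i + 1) *
    ∑ s', sdistFrom P pol s a i s' *
      ((∑ a', pol s' a' * R s' a') - β * klDisc (pol s') (πd s'))

/-- KL-regularized objective
`J_f(π) = E_{s∼ρ₀, a∼π}[Q_π(s,a) − β·KL(π(·|s)‖π_d(·|s))]`. -/
noncomputable def Jf {S A : Type*} [Fintype S] [Fintype A]
    (γ β : ℝ) (R : S → A → ℝ) (P : S → A → S → ℝ) (ρ0 : S → ℝ) (πd pol : S → A → ℝ) : ℝ :=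
  ∑ s, ρ0 s * ((∑ a, pol s a * softQ γ β R P πd pol s a) - β * klDisc (pol s) (πd s))

/- ### Auxiliary material for the proof -/

section Gibbs
variable {A : Type*} [Fintype A]

lemma klDisc_nonneg {p q : A → ℝ} (hp : ∀ a, 0 ≤ p a) (hpsum : ∑ a, p a = 1)
    (hq : ∀ a, 0 < q a) (hqsum : ∑ a, q a = 1) : 0 ≤ klDisc p q := by
  have key : ∑ a, p a * Real.log (q a / p a) ≤ 0 := by
    calc ∑ a, p a * Real.log (q a / p a) ≤ ∑ a, (q a - p a) := by
          refine Finset.sum_le_sum fun a _ => ?_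
          rcases eq_or_lt_of_le (hp a) with h0 | h0
          · rw [← h0]; simpa using (hq a).le
          · have hlog := Real.log_le_sub_one_of_pos (div_pos (hq a) h0)
            have := mul_le_mul_of_nonneg_left hlog (hp a)
            calc p a * Real.log (q a / p a) ≤ p a * (q a / p a - 1) := this
              _ = q a - p a := by field_simp
      _ = 0 := by rw [Finset.sum_sub_distrib, hpsum, hqsum, sub_self]
  have emb : klDisc p q = -∑ a, p a * Real.log (q a / p a) := by
    rw [← Finset.sum_neg_distrib]
    refine Finset.sum_congr rfl fun a _ => ?_
    rcases eq_or_lt_of_le (hp a) with h0 | h0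
    · rw [← h0]; ring
    · rw [Real.log_div (ne_of_gt (hq a)) (ne_of_gt h0),
        Real.log_div (ne_of_gt h0) (ne_of_gt (hq a))]
      ring
  rw [emb]
  linarith

variable {β : ℝ} {pd Qs : A → ℝ}

lemma gibbs_formula (hpd : ∀ a, 0 < pd a)
    (hZ : (∑ a', pd a' * Real.exp (Qs a' / β)) ≠ 0)
    {p : A → ℝ} (hp : ∀ a, 0 ≤ p a) :
    klDisc p (fun a => pd a * Real.exp (Qs a / β) / ∑ a', pd a' * Real.exp (Qs a' / β))
      = klDisc p pd - (∑ a, p a * (Qs a / β))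
        + (∑ a, p a) * Real.log (∑ a', pd a' * Real.exp (Qs a' / β)) := by
  simp only [klDisc, Finset.sum_mul, ← Finset.sum_sub_distrib, ← Finset.sum_add_distrib]
  refine Finset.sum_congr rfl fun a _ => ?_
  rcases eq_or_lt_of_le (hp a) with h0 | h0
  · rw [← h0]; ring
  · have hne : pd a * Real.exp (Qs a / β) ≠ 0 :=
      mul_ne_zero (ne_of_gt (hpd a)) (Real.exp_ne_zero _)
    rw [Real.log_div (ne_of_gt h0) (div_ne_zero hne hZ),
      Real.log_div hne hZ,
      Real.log_mul (ne_of_gt (hpd a)) (Real.exp_ne_zero _),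
      Real.log_exp, Real.log_div (ne_of_gt h0) (ne_of_gt (hpd a))]
    ring

/-- The Gibbs policy maximizes the KL-regularized one-step objective. -/
lemma gibbs_opt (hβ : 0 < β) (hpd : ∀ a, 0 < pd a)
    [Nonempty A]
    {p : A → ℝ} (hp : ∀ a, 0 ≤ p a) (hpsum : ∑ a, p a = 1) :
    (∑ a, p a * Qs a) - β * klDisc p pd
      ≤ (∑ a, (pd a * Real.exp (Qs a / β) / ∑ a', pd a' * Real.exp (Qs a' / β)) * Qs a)
        - β * klDisc
          (fun a => pd a * Real.exp (Qs a / β) / ∑ a', pd a' * Real.exp (Qs a' / β))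
          pd := by
  set Z := ∑ a', pd a' * Real.exp (Qs a' / β) with hZdef
  have hZpos : 0 < Z := Finset.sum_pos
    (fun a _ => mul_pos (hpd a) (Real.exp_pos _)) Finset.univ_nonempty
  set q : A → ℝ := fun a => pd a * Real.exp (Qs a / β) / Z with hqdef
  have hqpos : ∀ a, 0 < q a := fun a =>
    div_pos (mul_pos (hpd a) (Real.exp_pos _)) hZpos
  have hqsum : ∑ a, q a = 1 := by
    simp only [hqdef, ← Finset.sum_div]
    rw [← hZdef, div_self (ne_of_gt hZpos)]
  have h1 : 0 ≤ klDisc p q := klDisc_nonneg hp hpsum hqpos hqsum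
  have h2 := gibbs_formula hpd (ne_of_gt hZpos) hp
  rw [hpsum, one_mul] at h2
  have h3 : klDisc q q = 0 := by
    simp only [klDisc]
    refine Finset.sum_eq_zero fun a _ => ?_
    rw [div_self (ne_of_gt (hqpos a)), Real.log_one, mul_zero]
  have h4 := gibbs_formula hpd (ne_of_gt hZpos) (fun a => (hqpos a).le)
  rw [hqsum, one_mul] at h4
  rw [← hqdef] at h2 h4
  rw [h3] at h4
  have e1 : ∑ a, p a * (Qs a / β) = (∑ a, p a * Qs a) / β := by
    rw [Finset.sum_div]
    exact Finset.sum_congr rfl fun a _ => by ring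
  have e2 : ∑ a, q a * (Qs a / β) = (∑ a, q a * Qs a) / β := by
    rw [Finset.sum_div]
    exact Finset.sum_congr rfl fun a _ => by ring
  rw [e1] at h2
  rw [e2] at h4
  have hb := mul_le_mul_of_nonneg_left (h2 ▸ h1) hβ.le
  have hb4 := congrArg (fun x => β * x) h4.symm
  simp only [mul_sub, mul_add, mul_zero] at hb hb4
  rw [mul_div_cancel₀ _ (ne_of_gt hβ)] at hb hb4
  linarith

end Gibbs

section Aux
variable {S A : Type*} [Fintype S] [Fintype A]
variable {P : S → A → S → ℝ} {pol : S → A → ℝ}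

lemma sum_swap3 {α β χ : Type*} [Fintype α] [Fintype β] [Fintype χ] (f : α → β → χ → ℝ) :
    ∑ x, ∑ y, ∑ z, f x y z = ∑ y, ∑ z, ∑ x, f x y z := by
  rw [Finset.sum_comm]
  exact Finset.sum_congr rfl fun y _ => Finset.sum_comm ..

lemma sdist_nonneg (hP : ∀ s a s', 0 ≤ P s a s') (hpol : ∀ s a, 0 ≤ pol s a)
    (s : S) (a : A) : ∀ i s', 0 ≤ sdistFrom P pol s a i s' := by
  intro i
  induction i with
  | zero => intro s'; exact hP s a s'
  | succ i ih =>
    intro s''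
    simp only [sdistFrom]
    refine Finset.sum_nonneg fun s' _ => Finset.sum_nonneg fun a' _ => ?_
    exact mul_nonneg (mul_nonneg (ih s') (hpol s' a')) (hP s' a' s'')

lemma sdist_sum (hPsum : ∀ s a, ∑ s', P s a s' = 1)
    (hpolsum : ∀ s, ∑ a, pol s a = 1)
    (s : S) (a : A) : ∀ i, ∑ s', sdistFrom P pol s a i s' = 1 := by
  intro i
  induction i with
  | zero => exact hPsum s a
  | succ i ih =>
    simp only [sdistFrom]
    rw [Finset.sum_comm]
    calc ∑ s', ∑ s'', ∑ a', sdistFrom P pol s a i s' * pol s' a' * P s' a' s''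
        = ∑ s', sdistFrom P pol s a i s' := by
          refine Finset.sum_congr rfl fun s' _ => ?_
          rw [Finset.sum_comm]
          have : ∀ a' : A, ∑ s'', sdistFrom P pol s a i s' * pol s' a' * P s' a' s''
              = sdistFrom P pol s a i s' * pol s' a' := by
            intro a'
            rw [← Finset.mul_sum, hPsum s' a', mul_one]
          simp only [this, ← Finset.mul_sum, hpolsum s', mul_one]
      _ = 1 := ih

lemma sdist_succ (s : S) (a : A) : ∀ (i : ℕ) (s'' : S),
    sdistFrom P pol s a (i + 1) s''
      = ∑ s1, P s a s1 * ∑ a1, pol s1 a1 * sdistFrom P pol s1 a1 i s'' := by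
  intro i
  induction i with
  | zero =>
    intro s''
    simp only [sdistFrom]
    refine Finset.sum_congr rfl fun s1 _ => ?_
    rw [Finset.mul_sum]
    refine Finset.sum_congr rfl fun a1 _ => by ring
  | succ i ih =>
    intro s''
    show (∑ s', ∑ a', sdistFrom P pol s a (i+1) s' * pol s' a' * P s' a' s'')
      = ∑ s1, P s a s1 * ∑ a1, pol s1 a1 * sdistFrom P pol s1 a1 (i+1) s''
    calc ∑ s', ∑ a', sdistFrom P pol s a (i+1) s' * pol s' a' * P s' a' s''
        = ∑ s', ∑ a', ∑ s1, ∑ a1,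
            P s a s1 * (pol s1 a1 * sdistFrom P pol s1 a1 i s') * pol s' a' * P s' a' s'' := by
          refine Finset.sum_congr rfl fun s' _ => Finset.sum_congr rfl fun a' _ => ?_
          rw [ih s', Finset.sum_mul, Finset.sum_mul]
          refine Finset.sum_congr rfl fun s1 _ => ?_
          rw [Finset.mul_sum, Finset.sum_mul, Finset.sum_mul]
      _ = ∑ s1, ∑ a1, ∑ s', ∑ a',
            P s a s1 * (pol s1 a1 * sdistFrom P pol s1 a1 i s') * pol s' a' * P s' a' s'' := by
          rw [show (∑ s', ∑ a', ∑ s1, ∑ a1,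
              P s a s1 * (pol s1 a1 * sdistFrom P pol s1 a1 i s') * pol s' a' * P s' a' s'')
              = ∑ s', ∑ s1, ∑ a', ∑ a1,
              P s a s1 * (pol s1 a1 * sdistFrom P pol s1 a1 i s') * pol s' a' * P s' a' s'' from
            Finset.sum_congr rfl fun x _ => Finset.sum_comm ..
            , Finset.sum_comm]
          refine Finset.sum_congr rfl fun z _ => ?_
          rw [show (∑ s', ∑ a', ∑ a1,
              P s a z * (pol z a1 * sdistFrom P pol z a1 i s') * pol s' a' * P s' a' s'')
              = ∑ s', ∑ a1, ∑ a',
              P s a z * (pol z a1 * sdistFrom P pol z a1 i s') * pol s' a' * P s' a' s'' from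
            Finset.sum_congr rfl fun x _ => Finset.sum_comm ..
            , Finset.sum_comm]
      _ = ∑ s1, P s a s1 * ∑ a1, pol s1 a1 * sdistFrom P pol s1 a1 (i+1) s'' := by
          refine Finset.sum_congr rfl fun s1 _ => ?_
          rw [Finset.mul_sum]
          refine Finset.sum_congr rfl fun a1 _ => ?_
          rw [show pol s1 a1 * sdistFrom P pol s1 a1 (i+1) s''
              = pol s1 a1 * ∑ s', ∑ a',
                  sdistFrom P pol s1 a1 i s' * pol s' a' * P s' a' s'' from rfl]
          rw [Finset.mul_sum, Finset.mul_sum]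
          refine Finset.sum_congr rfl fun s' _ => ?_
          rw [Finset.mul_sum, Finset.mul_sum]
          refine Finset.sum_congr rfl fun a' _ => by ring

lemma avg_bound (d g : S → ℝ) (hd : ∀ s, 0 ≤ d s) (hdsum : ∑ s, d s = 1) :
    |∑ s', d s' * g s'| ≤ ∑ s', |g s'| := by
  calc |∑ s', d s' * g s'| ≤ ∑ s', |d s' * g s'| := Finset.abs_sum_le_sum_abs _ _
    _ ≤ ∑ s', |g s'| := by
        refine Finset.sum_le_sum fun s' _ => ?_
        rw [abs_mul, abs_of_nonneg (hd s')]
        have hd1 : d s' ≤ 1 := by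
          rw [← hdsum]
          exact Finset.single_le_sum (fun i _ => hd i) (Finset.mem_univ s')
        nlinarith [abs_nonneg (g s')]

lemma summable_term {γ : ℝ} (hγ : γ ∈ Set.Ioo (0:ℝ) 1)
    (hP : ∀ s a s', 0 ≤ P s a s') (hPsum : ∀ s a, ∑ s', P s a s' = 1)
    (hpol : ∀ s a, 0 ≤ pol s a) (hpolsum : ∀ s, ∑ a, pol s a = 1)
    (g : S → ℝ) (s : S) (a : A) :
    Summable (fun i : ℕ => γ ^ (i + 1) * ∑ s', sdistFrom P pol s a i s' * g s') := by
  obtain ⟨hγ0, hγ1⟩ := hγ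
  have hM : Summable (fun i : ℕ => γ ^ (i+1) * ∑ s', |g s'|) := by
    have := (summable_geometric_of_lt_one hγ0.le hγ1).mul_right (γ * ∑ s', |g s'|)
    refine this.congr fun i => ?_
    rw [pow_succ]; ring
  refine Summable.of_norm_bounded hM fun i => ?_
  rw [Real.norm_eq_abs, abs_mul, abs_of_nonneg (pow_nonneg hγ0.le _)]
  exact mul_le_mul_of_nonneg_left
    (avg_bound _ g (sdist_nonneg hP hpol s a i) (sdist_sum hPsum hpolsum s a i))
    (pow_nonneg hγ0.le _)

/-- Per-state regularized one-step reward. -/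
noncomputable def gFun (β : ℝ) (R : S → A → ℝ) (πd pol : S → A → ℝ) (s : S) : ℝ :=
  (∑ a, pol s a * R s a) - β * klDisc (pol s) (πd s)

/-- Soft state value function. -/
noncomputable def Vf (γ β : ℝ) (R : S → A → ℝ) (P : S → A → S → ℝ)
    (πd pol : S → A → ℝ) (s : S) : ℝ :=
  (∑ a, pol s a * softQ γ β R P πd pol s a) - β * klDisc (pol s) (πd s)

lemma softQ_bellman {γ β : ℝ} (hγ : γ ∈ Set.Ioo (0:ℝ) 1)
    (R : S → A → ℝ) (πd : S → A → ℝ)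
    (hP : ∀ s a s', 0 ≤ P s a s') (hPsum : ∀ s a, ∑ s', P s a s' = 1)
    (hpol : ∀ s a, 0 ≤ pol s a) (hpolsum : ∀ s, ∑ a, pol s a = 1)
    (s : S) (a : A) :
    softQ γ β R P πd pol s a
      = R s a + γ * ∑ s', P s a s' * Vf γ β R P πd pol s' := by
  classical
  set g : S → ℝ := gFun β R πd pol with hg
  set h : S → A → ℕ → ℝ := fun s1 a1 i =>
    γ ^ (i + 1) * ∑ s'', sdistFrom P pol s1 a1 i s'' * g s'' with hh
  have hsummable : ∀ s1 a1, Summable (h s1 a1) := fun s1 a1 =>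
    summable_term hγ hP hPsum hpol hpolsum g s1 a1
  have hQ : ∀ s1 a1, softQ γ β R P πd pol s1 a1 = R s1 a1 + ∑' i, h s1 a1 i :=
    fun s1 a1 => rfl
  have hf1 : ∀ i : ℕ, h s a (i + 1)
      = ∑ s1, ∑ a1, γ * (P s a s1 * pol s1 a1) * h s1 a1 i := by
    intro i
    have e1 : h s a (i + 1)
        = ∑ s'', ∑ s1, ∑ a1, γ ^ (i + 1 + 1)
            * (P s a s1 * (pol s1 a1 * sdistFrom P pol s1 a1 i s'') * g s'') := by
      simp only [hh]
      rw [Finset.mul_sum]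
      refine Finset.sum_congr rfl fun s'' _ => ?_
      rw [sdist_succ s a i s'', Finset.sum_mul, Finset.mul_sum]
      refine Finset.sum_congr rfl fun s1 _ => ?_
      simp only [Finset.mul_sum, Finset.sum_mul]
    rw [e1, sum_swap3]
    refine Finset.sum_congr rfl fun s1 _ => Finset.sum_congr rfl fun a1 _ => ?_
    simp only [hh]
    simp only [Finset.mul_sum]
    exact Finset.sum_congr rfl fun s'' _ => by ring
  have htail : ∑' i, h s a (i + 1)
      = ∑ s1, ∑ a1, γ * (P s a s1 * pol s1 a1) * ∑' i, h s1 a1 i := by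
    rw [tsum_congr hf1]
    rw [Summable.tsum_finsetSum (fun s1 _ => summable_sum fun a1 _ => ((hsummable s1 a1).mul_left _))]
    refine Finset.sum_congr rfl fun s1 _ => ?_
    rw [Summable.tsum_finsetSum (fun a1 _ => (hsummable s1 a1).mul_left _)]
    exact Finset.sum_congr rfl fun a1 _ => tsum_mul_left
  have hsplit : ∑' i, h s a i = h s a 0 + ∑' i, h s a (i + 1) :=
    Summable.tsum_eq_zero_add (hsummable s a)
  have hh0 : h s a 0 = γ * ∑ s1, P s a s1 * g s1 := by
    simp only [hh, sdistFrom, zero_add, pow_one]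
  have hVf : ∀ s1, Vf γ β R P πd pol s1
      = g s1 + ∑ a1, pol s1 a1 * (∑' i, h s1 a1 i) := by
    intro s1
    simp only [Vf, hg, gFun]
    rw [show (∑ a1, pol s1 a1 * softQ γ β R P πd pol s1 a1)
        = ∑ a1, (pol s1 a1 * R s1 a1 + pol s1 a1 * (∑' i, h s1 a1 i)) from
      Finset.sum_congr rfl fun a1 _ => by rw [hQ s1 a1]; ring]
    rw [Finset.sum_add_distrib]; ring
  rw [hQ s a, hsplit, htail, hh0]
  rw [show (∑ s', P s a s' * Vf γ β R P πd pol s')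
      = ∑ s', (P s a s' * g s' + ∑ a1, P s a s' * (pol s' a1 * ∑' i, h s' a1 i)) from
    Finset.sum_congr rfl fun s' _ => by rw [hVf s', mul_add, Finset.mul_sum]]
  rw [Finset.sum_add_distrib, mul_add]
  congr 1
  congr 1
  rw [Finset.mul_sum]
  refine Finset.sum_congr rfl fun s1 _ => ?_
  rw [Finset.mul_sum]
  exact Finset.sum_congr rfl fun a1 _ => by ring

/-- Policy improvement: the Gibbs update improves the soft value at every state. -/
lemma V_improve {γ β : ℝ} (hγ : γ ∈ Set.Ioo (0:ℝ) 1) (hβ : 0 < β)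
    (R : S → A → ℝ) {πd : S → A → ℝ} (hπd : ∀ s a, 0 < πd s a)
    (hP : ∀ s a s', 0 ≤ P s a s') (hPsum : ∀ s a, ∑ s', P s a s' = 1)
    {π π' : S → A → ℝ}
    (hπ : ∀ s a, 0 ≤ π s a) (hπsum : ∀ s, ∑ a, π s a = 1)
    (hπ' : ∀ s a, 0 ≤ π' s a) (hπ'sum : ∀ s, ∑ a, π' s a = 1)
    [Nonempty S] [Nonempty A]
    (hstep1 : ∀ s a, π' s a = πd s a * Real.exp (softQ γ β R P πd π s a / β) /
        ∑ a', πd s a' * Real.exp (softQ γ β R P πd π s a' / β)) :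
    ∀ s, Vf γ β R P πd π s ≤ Vf γ β R P πd π' s := by
  classical
  set D : S → ℝ := fun s => Vf γ β R P πd π' s - Vf γ β R P πd π s with hD
  obtain ⟨s0, -, hs0⟩ := Finset.exists_min_image Finset.univ D
    ⟨Classical.arbitrary S, Finset.mem_univ _⟩
  have hs0' : ∀ s, D s0 ≤ D s := fun s => hs0 s (Finset.mem_univ s)
  have hgibbs : ∀ s, Vf γ β R P πd π s
      ≤ (∑ a, π' s a * softQ γ β R P πd π s a) - β * klDisc (π' s) (πd s) := by
    intro s
    have hopt := gibbs_opt (β := β) (pd := πd s)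
      (Qs := fun a => softQ γ β R P πd π s a) hβ (hπd s) (hπ s) (hπsum s)
    have hfun : (fun a => πd s a * Real.exp (softQ γ β R P πd π s a / β) /
        ∑ a', πd s a' * Real.exp (softQ γ β R P πd π s a' / β)) = π' s :=
      funext fun a => (hstep1 s a).symm
    beta_reduce at hopt
    rw [hfun] at hopt
    rw [show (∑ a, (πd s a * Real.exp (softQ γ β R P πd π s a / β) /
          ∑ a', πd s a' * Real.exp (softQ γ β R P πd π s a' / β))
            * softQ γ β R P πd π s a)
        = ∑ a, π' s a * softQ γ β R P πd π s a from
      Finset.sum_congr rfl fun a _ => by rw [← hstep1 s a]] at hopt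
    exact hopt
  have key : ∀ s, γ * D s0 ≤ D s := by
    intro s
    have hbell : ∀ a, softQ γ β R P πd π' s a - softQ γ β R P πd π s a
        = γ * ∑ s', P s a s' * D s' := by
      intro a
      rw [softQ_bellman hγ R πd hP hPsum hπ' hπ'sum s a,
        softQ_bellman hγ R πd hP hPsum hπ hπsum s a]
      rw [show (∑ s', P s a s' * D s')
          = (∑ s', P s a s' * Vf γ β R P πd π' s')
            - ∑ s', P s a s' * Vf γ β R P πd π s' from by
        rw [← Finset.sum_sub_distrib]
        exact Finset.sum_congr rfl fun s' _ => by simp only [hD]; ring]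
      ring
    have h2 : ∑ a, π' s a * (softQ γ β R P πd π' s a - softQ γ β R P πd π s a) ≤ D s := by
      have hsplit : ∑ a, π' s a * (softQ γ β R P πd π' s a - softQ γ β R P πd π s a)
          = (∑ a, π' s a * softQ γ β R P πd π' s a)
            - ∑ a, π' s a * softQ γ β R P πd π s a := by
        rw [← Finset.sum_sub_distrib]
        exact Finset.sum_congr rfl fun a _ => by ring
      have hg := hgibbs s
      simp only [Vf] at hg
      simp only [hD, Vf]
      rw [hsplit]
      linarith
    have h3 : γ * D s0
        ≤ ∑ a, π' s a * (softQ γ β R P πd π' s a - softQ γ β R P πd π s a) := by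
      have hinner : ∀ a : A, D s0 ≤ ∑ s', P s a s' * D s' := by
        intro a
        calc D s0 = ∑ s', P s a s' * D s0 := by
              rw [← Finset.sum_mul, hPsum s a, one_mul]
          _ ≤ ∑ s', P s a s' * D s' :=
              Finset.sum_le_sum fun s' _ =>
                mul_le_mul_of_nonneg_left (hs0' s') (hP s a s')
      calc γ * D s0 = ∑ a, π' s a * (γ * D s0) := by
            rw [← Finset.sum_mul, hπ'sum s, one_mul]
        _ ≤ ∑ a, π' s a * (γ * ∑ s', P s a s' * D s') :=
            Finset.sum_le_sum fun a _ =>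
              mul_le_mul_of_nonneg_left
                (mul_le_mul_of_nonneg_left (hinner a) hγ.1.le) (hπ' s a)
        _ = ∑ a, π' s a * (softQ γ β R P πd π' s a - softQ γ β R P πd π s a) :=
            Finset.sum_congr rfl fun a _ => by rw [hbell a]
    linarith
  have hD0 : 0 ≤ D s0 := by
    have h := key s0
    nlinarith [hγ.2]
  intro s
  have := le_trans hD0 (hs0' s)
  simp only [hD] at this
  linarith

end Aux

/-- Monotonicity of soft policy iteration: the Gibbs update
`π_n(·|s) ∝ π_d(·|s)·exp(Q_{π_{n-1}}(s,·)/β)` satisfies `J_f(π_n) ≥ J_f(π_{n-1})`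
for all `n ≥ 1`. -/
theorem soft_policy_iteration_monotone {S A : Type*} [Fintype S] [Fintype A]
    (γ : ℝ) (hγ : γ ∈ Set.Ioo (0 : ℝ) 1) (β : ℝ) (hβ : 0 < β)
    (R : S → A → ℝ)
    (P : S → A → S → ℝ) (hP : ∀ s a s', 0 ≤ P s a s') (hPsum : ∀ s a, ∑ s', P s a s' = 1)
    (ρ0 : S → ℝ) (hρ0 : ∀ s, 0 ≤ ρ0 s) (hρ0sum : ∑ s, ρ0 s = 1)
    (πd : S → A → ℝ) (hπd : ∀ s a, 0 < πd s a) (hπdsum : ∀ s, ∑ a, πd s a = 1)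
    (πseq : ℕ → S → A → ℝ)
    (h0 : ∀ s a, 0 ≤ πseq 0 s a) (h0sum : ∀ s, ∑ a, πseq 0 s a = 1)
    (hstep : ∀ n s a, πseq (n + 1) s a =
      πd s a * Real.exp (softQ γ β R P πd (πseq n) s a / β) /
        ∑ a', πd s a' * Real.exp (softQ γ β R P πd (πseq n) s a' / β)) :
    ∀ n : ℕ, 1 ≤ n → Jf γ β R P ρ0 πd (πseq (n - 1)) ≤ Jf γ β R P ρ0 πd (πseq n) := by
  classical
  rcases isEmpty_or_nonempty S with hS | hS
  · intro n _
    simp [Jf]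
  rcases isEmpty_or_nonempty A with hA | hA
  · exact absurd (h0sum (Classical.arbitrary S)) (by simp)
  -- every policy in the sequence is a valid policy
  have good : ∀ n, (∀ s a, 0 ≤ πseq n s a) ∧ (∀ s, ∑ a, πseq n s a = 1) := by
    intro n
    induction n with
    | zero => exact ⟨h0, h0sum⟩
    | succ n _ =>
      have hZpos : ∀ s : S,
          0 < ∑ a', πd s a' * Real.exp (softQ γ β R P πd (πseq n) s a' / β) :=
        fun s => Finset.sum_pos
          (fun a _ => mul_pos (hπd s a) (Real.exp_pos _)) Finset.univ_nonempty
      refine ⟨fun s a => ?_, fun s => ?_⟩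
      · rw [hstep n s a]
        exact le_of_lt (div_pos (mul_pos (hπd s a) (Real.exp_pos _)) (hZpos s))
      · rw [show (∑ a, πseq (n+1) s a)
            = ∑ a, πd s a * Real.exp (softQ γ β R P πd (πseq n) s a / β) /
                ∑ a', πd s a' * Real.exp (softQ γ β R P πd (πseq n) s a' / β) from
          Finset.sum_congr rfl fun a _ => hstep n s a]
        rw [← Finset.sum_div, div_self (ne_of_gt (hZpos s))]
  intro n hn
  obtain ⟨m, rfl⟩ : ∃ m, n = m + 1 := ⟨n - 1, (Nat.succ_pred_eq_of_pos hn).symm⟩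
  have hm : m + 1 - 1 = m := rfl
  rw [hm]
  have himp := V_improve (P := P) hγ hβ R hπd hP hPsum
    (good m).1 (good m).2 (good (m+1)).1 (good (m+1)).2 (hstep m)
  have hJf : ∀ pol : S → A → ℝ, Jf γ β R P ρ0 πd pol = ∑ s, ρ0 s * Vf γ β R P πd pol s :=
    fun pol => rfl
  rw [hJf, hJf]
  exact Finset.sum_le_sum fun s _ =>
    mul_le_mul_of_nonneg_left (himp s) (hρ0 s)
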